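/- arXiv:2205.10842 — 6 statements merged into one kernel-verified Lean document; each statement's English description precedes it below -/
import Mathlib

section
/- Let $p_0, p_1$ be probability density functions on $[0,\infty)$ with cumulative distribution functions $P_0, P_1$ satisfying $P_0(x) > P_1(x)$ for all $x$ with $P_z(x) \in (0,1)$ (feature bias against group 0). Let $c(x_1,x_2) = d(x_1,x_2)\mathbf{1}(x_2 > x_1)$ be a cost function where $d$ is continuously differentiable with $\partial d/\partial x_1 < 0$ on $(0,x_2)$ and $d(x,x)=0$. Then for any threshold $\tau > 0$ with $P_0(\tau), P_1(\tau) \in (0,1)$, the social burden gap $G(\tau) := \int_0^\tau d(x,\tau)p_0(x)dx - \int_0^\tau d(x,\tau)p_1(x)dx$ is strictly positive. -/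
open MeasureTheory Set

/-- Proposition 3.1: under feature bias against group 0, any single-threshold
classifier has strictly positive social burden gap. -/
theorem stmt_0
    (p0 p1 P0 P1 : ℝ → ℝ)
    (hp0 : ∀ x, 0 ≤ p0 x) (hp1 : ∀ x, 0 ≤ p1 x)
    (hp0c : Continuous p0) (hp1c : Continuous p1)
    (hP0 : ∀ x, P0 x = ∫ t in (0:ℝ)..x, p0 t)
    (hP1 : ∀ x, P1 x = ∫ t in (0:ℝ)..x, p1 t)
    (hbias : ∀ x, P0 x ∈ Set.Ioo (0:ℝ) 1 → P1 x ∈ Set.Ioo (0:ℝ) 1 → P1 x < P0 x)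
    (d : ℝ → ℝ → ℝ)
    (hd_smooth : ∀ x₂, ContDiffOn ℝ 1 (fun x₁ => d x₁ x₂) (Set.Icc 0 x₂))
    (hd_grad : ∀ x₂ x₁, x₁ ∈ Set.Ioo 0 x₂ → deriv (fun x => d x x₂) x₁ < 0)
    (hd_zero : ∀ x, d x x = 0)
    (τ : ℝ) (hτ : 0 < τ)
    (hPτ0 : P0 τ ∈ Set.Ioo (0:ℝ) 1) (hPτ1 : P1 τ ∈ Set.Ioo (0:ℝ) 1) :
    0 < (∫ x in (0:ℝ)..τ, d x τ * p0 x) - (∫ x in (0:ℝ)..τ, d x τ * p1 x) := by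
  set g : ℝ → ℝ := fun x => d x τ with hg
  set g' : ℝ → ℝ := fun x => derivWithin g (Icc 0 τ) x with hg'
  have huIcc : Set.uIcc (0:ℝ) τ = Icc 0 τ := uIcc_of_le hτ.le
  have hgc : ContinuousOn g (Icc 0 τ) := (hd_smooth τ).continuousOn
  have hg'c : ContinuousOn g' (Icc 0 τ) :=
    (hd_smooth τ).continuousOn_derivWithin (uniqueDiffOn_Icc hτ) le_rfl
  -- on the interior, g' = deriv g and g has that derivative
  have hmem : ∀ x ∈ Ioo (0:ℝ) τ, Icc (0:ℝ) τ ∈ nhds x := fun x hx =>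
    Icc_mem_nhds hx.1 hx.2
  have hg'eq : ∀ x ∈ Ioo (0:ℝ) τ, g' x = deriv g x := fun x hx =>
    derivWithin_of_mem_nhds (hmem x hx)
  have hgderiv : ∀ x ∈ Ioo (0:ℝ) τ, HasDerivAt g (g' x) x := by
    intro x hx
    have hdiff : DifferentiableAt ℝ g x :=
      ((hd_smooth τ).differentiableOn one_ne_zero x (Ioo_subset_Icc_self hx)).differentiableAt
        (hmem x hx)
    rw [hg'eq x hx]
    exact hdiff.hasDerivAt
  have hg'neg : ∀ x ∈ Ioo (0:ℝ) τ, g' x < 0 := fun x hx => by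
    rw [hg'eq x hx]; exact hd_grad τ x hx
  -- P0, P1 facts
  have hP0deriv : ∀ x : ℝ, HasDerivAt P0 (p0 x) x := by
    intro x
    have := (hp0c.integral_hasStrictDerivAt 0 x).hasDerivAt
    have hEq : P0 = fun u => ∫ t in (0:ℝ)..u, p0 t := funext hP0
    rw [hEq]; exact this
  have hP1deriv : ∀ x : ℝ, HasDerivAt P1 (p1 x) x := by
    intro x
    have := (hp1c.integral_hasStrictDerivAt 0 x).hasDerivAt
    have hEq : P1 = fun u => ∫ t in (0:ℝ)..u, p1 t := funext hP1
    rw [hEq]; exact this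
  have hP0c : Continuous P0 := by
    have : Differentiable ℝ P0 := fun x => (hP0deriv x).differentiableAt
    exact this.continuous
  have hP1c : Continuous P1 := by
    have : Differentiable ℝ P1 := fun x => (hP1deriv x).differentiableAt
    exact this.continuous
  have hP00 : P0 0 = 0 := by rw [hP0]; simp
  have hP10 : P1 0 = 0 := by rw [hP1]; simp
  have hP0mono : MonotoneOn P0 (Icc 0 τ) := by
    intro x hx y hy hxy
    rw [hP0 x, hP0 y]
    apply intervalIntegral.integral_mono_interval le_rfl hx.1 hxy
      (Filter.Eventually.of_forall fun t => hp0 t)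
      (hp0c.intervalIntegrable 0 y)
  have hP1mono : MonotoneOn P1 (Icc 0 τ) := by
    intro x hx y hy hxy
    rw [hP1 x, hP1 y]
    apply intervalIntegral.integral_mono_interval le_rfl hx.1 hxy
      (Filter.Eventually.of_forall fun t => hp1 t)
      (hp1c.intervalIntegrable 0 y)
  have hP0nonneg : ∀ x ∈ Icc (0:ℝ) τ, 0 ≤ P0 x := fun x hx => by
    rw [← hP00]; exact hP0mono (left_mem_Icc.2 hτ.le) hx hx.1
  -- the key ordering lemma : P1 ≤ P0 on [0,τ]
  have hord : ∀ x ∈ Icc (0:ℝ) τ, P1 x ≤ P0 x := by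
    intro x hx
    by_contra hlt
    push_neg at hlt
    have hP1x : 0 < P1 x := lt_of_le_of_lt (hP0nonneg x hx) hlt
    -- if P0 x > 0 we can apply hbias directly
    rcases lt_or_ge 0 (P0 x) with hx0 | hx0
    · have hm0 : P0 x ∈ Set.Ioo (0:ℝ) 1 :=
        ⟨hx0, lt_of_le_of_lt (hP0mono hx (right_mem_Icc.2 hτ.le) hx.2) hPτ0.2⟩
      have hm1 : P1 x ∈ Set.Ioo (0:ℝ) 1 :=
        ⟨hP1x, lt_of_le_of_lt (hP1mono hx (right_mem_Icc.2 hτ.le) hx.2) hPτ1.2⟩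
      exact absurd (hbias x hm0 hm1) (not_lt.2 hlt.le)
    set v : ℝ := min (P1 x) (P0 τ) / 2 with hv
    have hv0 : 0 < v := div_pos (lt_min hP1x hPτ0.1) two_pos
    have hvP1 : v < P1 x := by
      have h := min_le_left (P1 x) (P0 τ); simp only [hv]; linarith
    have hvP0 : v < P0 τ := by
      have h := min_le_right (P1 x) (P0 τ); simp only [hv]; linarith [hPτ0.1]
    -- IVT: find y ∈ [x,τ] with P0 y = v
    have hivt : Icc (P0 x) (P0 τ) ⊆ P0 '' Icc x τ :=
      intermediate_value_Icc hx.2 (hP0c.continuousOn)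
    have hvmem : v ∈ Icc (P0 x) (P0 τ) := ⟨le_trans hx0 hv0.le, hvP0.le⟩
    obtain ⟨y, hy, hPy⟩ := hivt hvmem
    have hyIcc : y ∈ Icc (0:ℝ) τ := ⟨le_trans hx.1 hy.1, hy.2⟩
    have hP1y : P1 x ≤ P1 y := hP1mono hx hyIcc hy.1
    have h0mem : P0 y ∈ Set.Ioo (0:ℝ) 1 := ⟨hPy ▸ hv0, hPy ▸ lt_trans hvP0 hPτ0.2⟩
    have h1mem : P1 y ∈ Set.Ioo (0:ℝ) 1 :=
      ⟨lt_of_lt_of_le hP1x hP1y, lt_of_le_of_lt (hP1mono hyIcc (right_mem_Icc.2 hτ.le) hyIcc.2) hPτ1.2⟩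
    have := hbias y h0mem h1mem
    rw [hPy] at this
    linarith [lt_of_lt_of_le hvP1 hP1y]
  -- integrability facts
  have hint0 : IntervalIntegrable (fun x => g x * p0 x) volume 0 τ := by
    apply ContinuousOn.intervalIntegrable
    rw [huIcc]; exact hgc.mul hp0c.continuousOn
  have hint1 : IntervalIntegrable (fun x => g x * p1 x) volume 0 τ := by
    apply ContinuousOn.intervalIntegrable
    rw [huIcc]; exact hgc.mul hp1c.continuousOn
  have hintg'0 : IntervalIntegrable (fun x => g' x * P0 x) volume 0 τ := by
    apply ContinuousOn.intervalIntegrable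
    rw [huIcc]; exact hg'c.mul hP0c.continuousOn
  have hintg'1 : IntervalIntegrable (fun x => g' x * P1 x) volume 0 τ := by
    apply ContinuousOn.intervalIntegrable
    rw [huIcc]; exact hg'c.mul hP1c.continuousOn
  -- integration by parts via FTC-2 applied to g * P
  have parts : ∀ (P p : ℝ → ℝ), Continuous P → Continuous p →
      (∀ x : ℝ, HasDerivAt P (p x) x) → P 0 = 0 →
      IntervalIntegrable (fun x => g' x * P x) volume 0 τ →
      IntervalIntegrable (fun x => g x * p x) volume 0 τ →
      (∫ x in (0:ℝ)..τ, g x * p x) = -∫ x in (0:ℝ)..τ, g' x * P x := by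
    intro P p hPc hpc hPd hP0z hi1 hi2
    have hFTC : (∫ x in (0:ℝ)..τ, (g' x * P x + g x * p x)) =
        g τ * P τ - g 0 * P 0 := by
      apply intervalIntegral.integral_eq_sub_of_hasDerivAt_of_le hτ.le
      · exact (hgc.mul hPc.continuousOn)
      · intro x hx
        exact (hgderiv x hx).mul (hPd x)
      · exact hi1.add hi2
    have hzero : g τ * P τ - g 0 * P 0 = 0 := by
      have : g τ = 0 := hd_zero τ
      rw [this, hP0z]; ring
    rw [intervalIntegral.integral_add hi1 hi2] at hFTC
    rw [hzero] at hFTC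
    linarith
  have e0 := parts P0 p0 hP0c hp0c hP0deriv hP00 hintg'0 hint0
  have e1 := parts P1 p1 hP1c hp1c hP1deriv hP10 hintg'1 hint1
  -- rewrite the goal
  have hgoal : (∫ x in (0:ℝ)..τ, d x τ * p0 x) - (∫ x in (0:ℝ)..τ, d x τ * p1 x)
      = ∫ x in (0:ℝ)..τ, -g' x * (P0 x - P1 x) := by
    have ha : (∫ x in (0:ℝ)..τ, d x τ * p0 x) = ∫ x in (0:ℝ)..τ, g x * p0 x := rfl
    have hb : (∫ x in (0:ℝ)..τ, d x τ * p1 x) = ∫ x in (0:ℝ)..τ, g x * p1 x := rfl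
    have hc : (fun x => -g' x * (P0 x - P1 x)) = fun x => g' x * P1 x - g' x * P0 x :=
      funext fun x => by ring
    rw [ha, e0, hb, e1, hc, intervalIntegral.integral_sub hintg'1 hintg'0]
    ring
  rw [hgoal]
  have hcf : ContinuousOn (fun x => -g' x * (P0 x - P1 x)) (Icc 0 τ) :=
    hg'c.neg.mul (hP0c.continuousOn.sub hP1c.continuousOn)
  -- choose δ such that P0, P1 > 0 on (τ-δ, τ]
  have hδ : ∃ δ > 0, δ < τ ∧ ∀ x ∈ Ioo (τ - δ) τ, 0 < P0 x ∧ 0 < P1 x := by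
    have h0 : ∀ᶠ x in nhds τ, 0 < P0 x := continuousAt_const.eventually_lt hP0c.continuousAt
      hPτ0.1 |>.mono (fun x h => h)
    have h1 : ∀ᶠ x in nhds τ, 0 < P1 x := continuousAt_const.eventually_lt hP1c.continuousAt
      hPτ1.1 |>.mono (fun x h => h)
    obtain ⟨ε, hε, hball⟩ := Metric.eventually_nhds_iff.1 (h0.and h1)
    refine ⟨min (ε/2) (τ/2), by positivity, ?_, ?_⟩
    · calc min (ε/2) (τ/2) ≤ τ/2 := min_le_right _ _
        _ < τ := by linarith
    · intro x hx
      apply hball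
      rw [Real.dist_eq, abs_lt]
      constructor
      · have : min (ε/2) (τ/2) ≤ ε/2 := min_le_left _ _
        nlinarith [hx.1, hx.2]
      · linarith [hx.2, hε]
  obtain ⟨δ, hδ0, hδτ, hδpos⟩ := hδ
  have hsplit : (∫ x in (0:ℝ)..τ, -g' x * (P0 x - P1 x)) =
      (∫ x in (0:ℝ)..(τ - δ), -g' x * (P0 x - P1 x)) +
      ∫ x in (τ - δ)..τ, -g' x * (P0 x - P1 x) := by
    symm
    apply intervalIntegral.integral_add_adjacent_intervals
    · apply ContinuousOn.intervalIntegrable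
      exact hcf.mono (by
        rw [uIcc_of_le (by linarith : (0:ℝ) ≤ τ - δ)]
        exact Icc_subset_Icc le_rfl (by linarith))
    · apply ContinuousOn.intervalIntegrable
      exact hcf.mono (by
        rw [uIcc_of_le (by linarith : τ - δ ≤ τ)]
        exact Icc_subset_Icc (by linarith) le_rfl)
  rw [hsplit]
  have h1 : 0 ≤ ∫ x in (0:ℝ)..(τ - δ), -g' x * (P0 x - P1 x) := by
    apply intervalIntegral.integral_nonneg (by linarith : (0:ℝ) ≤ τ - δ)
    intro x hx
    rcases eq_or_lt_of_le hx.1 with h | h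
    · have : P0 x - P1 x = 0 := by rw [← h, hP00, hP10]; ring
      rw [this]; ring_nf; exact le_rfl
    · have hxI : x ∈ Ioo (0:ℝ) τ := ⟨h, lt_of_le_of_lt hx.2 (by linarith)⟩
      have hxIcc : x ∈ Icc (0:ℝ) τ := Ioo_subset_Icc_self hxI
      have := hg'neg x hxI
      have := hord x hxIcc
      nlinarith
  have h2 : 0 < ∫ x in (τ - δ)..τ, -g' x * (P0 x - P1 x) := by
    apply intervalIntegral.intervalIntegral_pos_of_pos_on
    · apply ContinuousOn.intervalIntegrable
      exact hcf.mono (by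
        rw [uIcc_of_le (by linarith : τ - δ ≤ τ)]
        exact Icc_subset_Icc (by linarith) le_rfl)
    · intro x hx
      have hxI : x ∈ Ioo (0:ℝ) τ := ⟨by linarith [hx.1], hx.2⟩
      have hxIcc : x ∈ Icc (0:ℝ) τ := Ioo_subset_Icc_self hxI
      obtain ⟨hx0, hx1⟩ := hδpos x hx
      have hmem0 : P0 x ∈ Set.Ioo (0:ℝ) 1 :=
        ⟨hx0, lt_of_le_of_lt (hP0mono hxIcc (right_mem_Icc.2 hτ.le) hxIcc.2) hPτ0.2⟩
      have hmem1 : P1 x ∈ Set.Ioo (0:ℝ) 1 :=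
        ⟨hx1, lt_of_le_of_lt (hP1mono hxIcc (right_mem_Icc.2 hτ.le) hxIcc.2) hPτ1.2⟩
      have hlt := hbias x hmem0 hmem1
      have := hg'neg x hxI
      nlinarith
    · linarith
  linarith
end

section
/- (Upper bound on social burden gap, Theorem 3.3.) Let $p_0, p_1$ be densities on $[0,\infty)$ with CDFs $P_0, P_1$. Let $d(x_1,x_2)$ satisfy $d(\tau,\tau)=0$ and $\partial d/\partial x_1 \in [g_l,g_u]$ on $(0,x_2)$ with $g_l \le g_u \le 0$. Define the social burden gap $G = \int_0^{\tau_0} d(x,\tau_0)p_0(x)dx - \int_0^{\tau_1} d(x,\tau_1)p_1(x)dx$, the selection rate disparity $H = P_1(\tau_1) - P_0(\tau_0)$, and $E_{z} = \int_0^{\tau_z} x\,p_z(x)dx$. Then $G \leq g_u \tau_1 H + (g_u\tau_1 - g_l\tau_0)P_0(\tau_0) - g_u E_1 + g_l E_0$. -/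
open MeasureTheory Set

/-- Pointwise bounds on `d x τ` via the mean value theorem. -/
lemma d_bounds (d : ℝ → ℝ → ℝ) (gl gu : ℝ)
    (hd_smooth : ∀ x₂, ContDiffOn ℝ 1 (fun x₁ => d x₁ x₂) (Set.Icc 0 x₂))
    (hd_grad : ∀ x₂ x₁, x₁ ∈ Set.Ioo 0 x₂ →
      deriv (fun x => d x x₂) x₁ ∈ Set.Icc gl gu)
    (hd_zero : ∀ x, d x x = 0)
    (τ : ℝ) (hτ : 0 < τ) :
    ∀ x ∈ Set.Icc 0 τ, -(gu * (τ - x)) ≤ d x τ ∧ d x τ ≤ -(gl * (τ - x)) := by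
  intro x hx
  have hsub : Set.Icc x τ ⊆ Set.Icc 0 τ := Set.Icc_subset_Icc hx.1 le_rfl
  have hcont : ContinuousOn (fun x₁ => d x₁ τ) (Set.Icc x τ) :=
    ((hd_smooth τ).continuousOn).mono hsub
  have hdiff : DifferentiableOn ℝ (fun x₁ => d x₁ τ)
      (interior (Set.Icc x τ)) := by
    rw [interior_Icc]
    exact ((hd_smooth τ).differentiableOn one_ne_zero).mono
      ((Set.Ioo_subset_Icc_self).trans hsub)
  have hmemx : x ∈ Set.Icc x τ := ⟨le_rfl, hx.2⟩
  have hmemτ : τ ∈ Set.Icc x τ := ⟨hx.2, le_rfl⟩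
  have hIoo : interior (Set.Icc x τ) ⊆ Set.Ioo 0 τ := by
    rw [interior_Icc]
    exact Set.Ioo_subset_Ioo hx.1 le_rfl
  have hlow : gl * (τ - x) ≤ d τ τ - d x τ :=
    (convex_Icc x τ).mul_sub_le_image_sub_of_le_deriv hcont hdiff
      (fun y hy => (hd_grad τ y (hIoo hy)).1) x hmemx τ hmemτ hx.2
  have hup : d τ τ - d x τ ≤ gu * (τ - x) :=
    (convex_Icc x τ).image_sub_le_mul_sub_of_deriv_le hcont hdiff
      (fun y hy => (hd_grad τ y (hIoo hy)).2) x hmemx τ hmemτ hx.2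
  rw [hd_zero τ] at hlow hup
  constructor <;> linarith

/-- Compute `∫ (c * (τ - x)) * p x`. -/
lemma integral_linear (p : ℝ → ℝ) (hpc : Continuous p) (c τ : ℝ) :
    ∫ x in (0:ℝ)..τ, c * (τ - x) * p x
      = c * (τ * (∫ t in (0:ℝ)..τ, p t) - ∫ x in (0:ℝ)..τ, x * p x) := by
  have h1 : ∀ x, c * (τ - x) * p x = c * τ * p x - c * (x * p x) := by
    intro x; ring
  simp_rw [h1]
  rw [intervalIntegral.integral_sub
      ((by fun_prop : Continuous fun x => c * τ * p x).intervalIntegrable _ _)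
      ((by fun_prop : Continuous fun x => c * (x * p x)).intervalIntegrable _ _),
    intervalIntegral.integral_const_mul, intervalIntegral.integral_const_mul]
  ring

/-- Theorem 3.3 (upper bound on the social burden gap). -/
theorem stmt_4
    (p0 p1 P0 P1 : ℝ → ℝ)
    (hp0 : ∀ x, 0 ≤ p0 x) (hp1 : ∀ x, 0 ≤ p1 x)
    (hp0c : Continuous p0) (hp1c : Continuous p1)
    (hP0 : ∀ x, P0 x = ∫ t in (0:ℝ)..x, p0 t)
    (hP1 : ∀ x, P1 x = ∫ t in (0:ℝ)..x, p1 t)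
    (d : ℝ → ℝ → ℝ) (gl gu : ℝ) (hglu : gl ≤ gu) (hgu : gu ≤ 0)
    (hd_smooth : ∀ x₂, ContDiffOn ℝ 1 (fun x₁ => d x₁ x₂) (Set.Icc 0 x₂))
    (hd_grad : ∀ x₂ x₁, x₁ ∈ Set.Ioo 0 x₂ →
      deriv (fun x => d x x₂) x₁ ∈ Set.Icc gl gu)
    (hd_zero : ∀ x, d x x = 0)
    (τ0 τ1 : ℝ) (hτ0 : 0 < τ0) (hτ1 : 0 < τ1)
    (G H E0 E1 : ℝ)
    (hG : G = (∫ x in (0:ℝ)..τ0, d x τ0 * p0 x) - (∫ x in (0:ℝ)..τ1, d x τ1 * p1 x))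
    (hH : H = P1 τ1 - P0 τ0)
    (hE0 : E0 = ∫ x in (0:ℝ)..τ0, x * p0 x)
    (hE1 : E1 = ∫ x in (0:ℝ)..τ1, x * p1 x) :
    G ≤ gu * τ1 * H + (gu * τ1 - gl * τ0) * P0 τ0 - gu * E1 + gl * E0 := by
  have hb0 := d_bounds d gl gu hd_smooth hd_grad hd_zero τ0 hτ0
  have hb1 := d_bounds d gl gu hd_smooth hd_grad hd_zero τ1 hτ1
  have hdc0 : ContinuousOn (fun x => d x τ0 * p0 x) (Set.Icc 0 τ0) :=
    ((hd_smooth τ0).continuousOn).mul hp0c.continuousOn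
  have hdc1 : ContinuousOn (fun x => d x τ1 * p1 x) (Set.Icc 0 τ1) :=
    ((hd_smooth τ1).continuousOn).mul hp1c.continuousOn
  have hint0 : IntervalIntegrable (fun x => d x τ0 * p0 x) volume 0 τ0 := by
    apply ContinuousOn.intervalIntegrable
    rwa [Set.uIcc_of_le hτ0.le]
  have hint1 : IntervalIntegrable (fun x => d x τ1 * p1 x) volume 0 τ1 := by
    apply ContinuousOn.intervalIntegrable
    rwa [Set.uIcc_of_le hτ1.le]
  have hI0 : (∫ x in (0:ℝ)..τ0, d x τ0 * p0 x)
      ≤ ∫ x in (0:ℝ)..τ0, (-gl) * (τ0 - x) * p0 x := by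
    apply intervalIntegral.integral_mono_on hτ0.le hint0
      ((by fun_prop : Continuous fun x => (-gl) * (τ0 - x) * p0 x).intervalIntegrable _ _)
    intro x hx
    have := (hb0 x hx).2
    nlinarith [hp0 x]
  have hI1 : (∫ x in (0:ℝ)..τ1, (-gu) * (τ1 - x) * p1 x)
      ≤ ∫ x in (0:ℝ)..τ1, d x τ1 * p1 x := by
    apply intervalIntegral.integral_mono_on hτ1.le
      ((by fun_prop : Continuous fun x => (-gu) * (τ1 - x) * p1 x).intervalIntegrable _ _) hint1
    intro x hx
    have := (hb1 x hx).1
    nlinarith [hp1 x]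
  rw [integral_linear p0 hp0c (-gl) τ0, ← hP0 τ0, ← hE0] at hI0
  rw [integral_linear p1 hp1c (-gu) τ1, ← hP1 τ1, ← hE1] at hI1
  rw [hG, hH]
  nlinarith [hI0, hI1]
end

section
/- (Lower bound on social burden gap, Theorem 3.3.) Under the same hypotheses as the upper bound, $G \geq g_l \tau_1 H + (g_l\tau_1 - g_u\tau_0)P_0(\tau_0) - g_l E_1 + g_u E_0$, where $H = P_1(\tau_1) - P_0(\tau_0)$ and $E_z = \int_0^{\tau_z} x\,p_z(x)dx$. -/
open MeasureTheory Set

lemma key_bound (f : ℝ → ℝ) (gl gu τ : ℝ)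
    (hs : ContDiffOn ℝ 1 f (Set.Icc 0 τ))
    (hg : ∀ x ∈ Set.Ioo 0 τ, deriv f x ∈ Set.Icc gl gu)
    (hz : f τ = 0) (x : ℝ) (hx : x ∈ Set.Icc 0 τ) :
    -gu * (τ - x) ≤ f x ∧ f x ≤ -gl * (τ - x) := by
  rcases eq_or_lt_of_le hx.2 with h | h
  · subst h; simp [hz]
  · obtain ⟨c, hc, hderiv⟩ := exists_deriv_eq_slope f h
      ((hs.continuousOn).mono (Icc_subset_Icc hx.1 le_rfl))
      (fun y hy => by
        have hy' : y ∈ Set.Ioo 0 τ := ⟨lt_of_le_of_lt hx.1 hy.1, hy.2⟩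
        exact ((hs.differentiableOn one_ne_zero).differentiableAt
          (Icc_mem_nhds hy'.1 hy'.2)).differentiableWithinAt)
    have hc' : c ∈ Set.Ioo 0 τ := ⟨lt_of_le_of_lt hx.1 hc.1, hc.2⟩
    have hgc := hg c hc'
    rw [hz] at hderiv
    have hne : τ - x ≠ 0 := by linarith
    have : f x = -(deriv f c) * (τ - x) := by
      field_simp at hderiv; nlinarith [hderiv]
    rw [this]
    constructor <;> nlinarith [hgc.1, hgc.2]

lemma int_linear (p : ℝ → ℝ) (hpc : Continuous p) (c τ : ℝ) :
    ∫ x in (0:ℝ)..τ, c * (τ - x) * p x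
      = c * τ * (∫ x in (0:ℝ)..τ, p x) - c * (∫ x in (0:ℝ)..τ, x * p x) := by
  have h1 : IntervalIntegrable p volume 0 τ := hpc.intervalIntegrable 0 τ
  have h2 : IntervalIntegrable (fun x => x * p x) volume 0 τ :=
    (continuous_id.mul hpc).intervalIntegrable 0 τ
  have : (fun x => c * (τ - x) * p x)
      = fun x => (c * τ) * p x - c * (x * p x) := by
    funext x; ring
  rw [this, intervalIntegral.integral_sub (h1.const_mul _) (h2.const_mul _),
    intervalIntegral.integral_const_mul, intervalIntegral.integral_const_mul]

/-- Theorem 3.3 (lower bound on the social burden gap). -/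
theorem stmt_5
    (p0 p1 P0 P1 : ℝ → ℝ)
    (hp0 : ∀ x, 0 ≤ p0 x) (hp1 : ∀ x, 0 ≤ p1 x)
    (hp0c : Continuous p0) (hp1c : Continuous p1)
    (hP0 : ∀ x, P0 x = ∫ t in (0:ℝ)..x, p0 t)
    (hP1 : ∀ x, P1 x = ∫ t in (0:ℝ)..x, p1 t)
    (d : ℝ → ℝ → ℝ) (gl gu : ℝ) (hglu : gl ≤ gu) (hgu : gu ≤ 0)
    (hd_smooth : ∀ x₂, ContDiffOn ℝ 1 (fun x₁ => d x₁ x₂) (Set.Icc 0 x₂))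
    (hd_grad : ∀ x₂ x₁, x₁ ∈ Set.Ioo 0 x₂ →
      deriv (fun x => d x x₂) x₁ ∈ Set.Icc gl gu)
    (hd_zero : ∀ x, d x x = 0)
    (τ0 τ1 : ℝ) (hτ0 : 0 < τ0) (hτ1 : 0 < τ1)
    (G H E0 E1 : ℝ)
    (hG : G = (∫ x in (0:ℝ)..τ0, d x τ0 * p0 x) - (∫ x in (0:ℝ)..τ1, d x τ1 * p1 x))
    (hH : H = P1 τ1 - P0 τ0)
    (hE0 : E0 = ∫ x in (0:ℝ)..τ0, x * p0 x)
    (hE1 : E1 = ∫ x in (0:ℝ)..τ1, x * p1 x) :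
    G ≥ gl * τ1 * H + (gl * τ1 - gu * τ0) * P0 τ0 - gl * E1 + gu * E0 := by
  have key := fun τ (hτ : 0 < τ) => key_bound (fun x => d x τ) gl gu τ
    (hd_smooth τ) (fun x hx => hd_grad τ x hx) (hd_zero τ)
  -- integrability of d(·,τ)*p on [0,τ]
  have hint : ∀ (τ : ℝ) (p : ℝ → ℝ), 0 < τ → Continuous p →
      IntervalIntegrable (fun x => d x τ * p x) volume 0 τ := by
    intro τ p hτ hpc
    apply ContinuousOn.intervalIntegrable
    rw [Set.uIcc_of_le hτ.le]
    exact ((hd_smooth τ).continuousOn).mul hpc.continuousOn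
  have hintl : ∀ (τ : ℝ) (p : ℝ → ℝ) (c : ℝ), Continuous p →
      IntervalIntegrable (fun x => c * (τ - x) * p x) volume 0 τ := by
    intro τ p c hpc
    exact Continuous.intervalIntegrable (by continuity) 0 τ
  -- lower bound for the first integral
  have hA : (∫ x in (0:ℝ)..τ0, -gu * (τ0 - x) * p0 x) ≤ ∫ x in (0:ℝ)..τ0, d x τ0 * p0 x := by
    apply intervalIntegral.integral_mono_on hτ0.le (hintl τ0 p0 (-gu) hp0c) (hint τ0 p0 hτ0 hp0c)
    intro x hx
    exact mul_le_mul_of_nonneg_right ((key τ0 hτ0 x hx).1) (hp0 x)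
  have hB : (∫ x in (0:ℝ)..τ1, d x τ1 * p1 x) ≤ ∫ x in (0:ℝ)..τ1, -gl * (τ1 - x) * p1 x := by
    apply intervalIntegral.integral_mono_on hτ1.le (hint τ1 p1 hτ1 hp1c) (hintl τ1 p1 (-gl) hp1c)
    intro x hx
    exact mul_le_mul_of_nonneg_right ((key τ1 hτ1 x hx).2) (hp1 x)
  rw [int_linear p0 hp0c (-gu) τ0, ← hP0 τ0, ← hE0] at hA
  rw [int_linear p1 hp1c (-gl) τ1, ← hP1 τ1, ← hE1] at hB
  rw [hG, hH]
  nlinarith [hA, hB]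
end

section
/- (Group-specific cost bounds, Theorem 3.5.) Let group $z \in \{0,1\}$ have cost function $d_z(x_1,x_2)$ with $d_z(\tau,\tau)=0$ and $\partial d_z/\partial x_1 \in [g_{l,z}, g_{u,z}]$, $g_{l,z} \le g_{u,z} \le 0$. With $G = \int_0^{\tau_0}d_0(x,\tau_0)p_0(x)dx - \int_0^{\tau_1}d_1(x,\tau_1)p_1(x)dx$, $H = P_1(\tau_1)-P_0(\tau_0)$, and $E_z = \int_0^{\tau_z}x\,p_z(x)dx$, the following bounds hold: $G \leq g_{u,1}\tau_1 H + (g_{u,1}\tau_1 - g_{l,0}\tau_0)P_0(\tau_0) - g_{u,1}E_1 + g_{l,0}E_0$ and $G \geq g_{l,1}\tau_1 H + (g_{l,1}\tau_1 - g_{u,0}\tau_0)P_0(\tau_0) - g_{l,1}E_1 + g_{u,0}E_0$. -/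
open MeasureTheory Set intervalIntegral

/-- Pointwise bounds on the cost function from derivative bounds. -/
lemma cost_pointwise (d : ℝ → ℝ) (gl gu τ : ℝ) (hτ : 0 < τ)
    (hsm : ContDiffOn ℝ 1 d (Icc 0 τ))
    (hgr : ∀ x ∈ Ioo 0 τ, deriv d x ∈ Icc gl gu)
    (hz : d τ = 0) :
    ∀ x ∈ Icc 0 τ, gu * (x - τ) ≤ d x ∧ d x ≤ gl * (x - τ) := by
  have hdiffOn : DifferentiableOn ℝ d (Icc 0 τ) := hsm.differentiableOn one_ne_zero
  have hopen : interior (Icc (0:ℝ) τ) = Ioo 0 τ := interior_Icc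
  have hdAt : ∀ x ∈ Ioo (0:ℝ) τ, DifferentiableAt ℝ d x := by
    intro x hx
    exact (hdiffOn x (Ioo_subset_Icc_self hx)).differentiableAt
      (Icc_mem_nhds hx.1 hx.2)
  intro x hx
  constructor
  · -- antitone of g := d - gu*(· - τ)
    have hanti : AntitoneOn (fun y => d y - gu * (y - τ)) (Icc 0 τ) := by
      apply antitoneOn_of_deriv_nonpos (convex_Icc 0 τ)
      · exact hsm.continuousOn.sub (by fun_prop)
      · rw [hopen]
        intro y hy
        exact ((hdAt y hy).sub (by fun_prop)).differentiableWithinAt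
      · rw [hopen]
        intro y hy
        have h1 : HasDerivAt (fun y => d y - gu * (y - τ)) (deriv d y - gu) y := by
          have := ((hasDerivAt_id y).sub_const τ).const_mul gu
          have h2 := (hdAt y hy).hasDerivAt.sub this
          rw [mul_one] at h2
          exact h2
        rw [h1.deriv]
        have := (hgr y hy).2
        linarith
    have := hanti hx (right_mem_Icc.mpr (by linarith [hx.1])) hx.2
    simp only [hz] at this
    linarith
  · have hmono : MonotoneOn (fun y => d y - gl * (y - τ)) (Icc 0 τ) := by
      apply monotoneOn_of_deriv_nonneg (convex_Icc 0 τ)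
      · exact hsm.continuousOn.sub (by fun_prop)
      · rw [hopen]
        intro y hy
        exact ((hdAt y hy).sub (by fun_prop)).differentiableWithinAt
      · rw [hopen]
        intro y hy
        have h1 : HasDerivAt (fun y => d y - gl * (y - τ)) (deriv d y - gl) y := by
          have := ((hasDerivAt_id y).sub_const τ).const_mul gl
          have h2 := (hdAt y hy).hasDerivAt.sub this
          rw [mul_one] at h2
          exact h2
        rw [h1.deriv]
        have := (hgr y hy).1
        linarith
    have := hmono hx (right_mem_Icc.mpr (by linarith [hx.1])) hx.2
    simp only [hz] at this
    linarith

/-- Integral of c*(x-τ)*p over [0,τ]. -/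
lemma lin_integral (p : ℝ → ℝ) (hpc : Continuous p) (c τ : ℝ) :
    (∫ x in (0:ℝ)..τ, c * (x - τ) * p x)
      = c * (∫ x in (0:ℝ)..τ, x * p x) - c * τ * (∫ x in (0:ℝ)..τ, p x) := by
  have h1 : IntervalIntegrable (fun x => c * (x * p x)) volume 0 τ := by
    apply Continuous.intervalIntegrable; fun_prop
  have h2 : IntervalIntegrable (fun x => (c * τ) * p x) volume 0 τ := by
    apply Continuous.intervalIntegrable; fun_prop
  have : (∫ x in (0:ℝ)..τ, c * (x - τ) * p x)
      = ∫ x in (0:ℝ)..τ, (c * (x * p x) - (c * τ) * p x) := by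
    apply intervalIntegral.integral_congr
    intro x _; ring
  rw [this, intervalIntegral.integral_sub h1 h2,
    intervalIntegral.integral_const_mul, intervalIntegral.integral_const_mul]

/-- Integral bounds. -/
lemma int_bound (d : ℝ → ℝ) (p : ℝ → ℝ) (hp : ∀ x, 0 ≤ p x) (hpc : Continuous p)
    (gl gu τ : ℝ) (hτ : 0 < τ)
    (hsm : ContDiffOn ℝ 1 d (Icc 0 τ))
    (hgr : ∀ x ∈ Ioo 0 τ, deriv d x ∈ Icc gl gu)
    (hz : d τ = 0) :
    gu * (∫ x in (0:ℝ)..τ, x * p x) - gu * τ * (∫ x in (0:ℝ)..τ, p x)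
      ≤ (∫ x in (0:ℝ)..τ, d x * p x) ∧
    (∫ x in (0:ℝ)..τ, d x * p x)
      ≤ gl * (∫ x in (0:ℝ)..τ, x * p x) - gl * τ * (∫ x in (0:ℝ)..τ, p x) := by
  have huIcc : uIcc (0:ℝ) τ = Icc 0 τ := uIcc_of_le hτ.le
  have hint : IntervalIntegrable (fun x => d x * p x) volume 0 τ := by
    apply ContinuousOn.intervalIntegrable
    rw [huIcc]
    exact hsm.continuousOn.mul hpc.continuousOn
  have hintu : IntervalIntegrable (fun x => gu * (x - τ) * p x) volume 0 τ := by
    apply Continuous.intervalIntegrable; fun_prop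
  have hintl : IntervalIntegrable (fun x => gl * (x - τ) * p x) volume 0 τ := by
    apply Continuous.intervalIntegrable; fun_prop
  have key := cost_pointwise d gl gu τ hτ hsm hgr hz
  constructor
  · rw [← lin_integral p hpc gu τ]
    apply intervalIntegral.integral_mono_on hτ.le hintu hint
    intro x hx
    exact mul_le_mul_of_nonneg_right ((key x hx).1) (hp x)
  · rw [← lin_integral p hpc gl τ]
    apply intervalIntegral.integral_mono_on hτ.le hint hintl
    intro x hx
    exact mul_le_mul_of_nonneg_right ((key x hx).2) (hp x)

/-- Theorem 3.5 (social burden gap bounds with group-specific cost functions). -/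
theorem stmt_6
    (p0 p1 P0 P1 : ℝ → ℝ)
    (hp0 : ∀ x, 0 ≤ p0 x) (hp1 : ∀ x, 0 ≤ p1 x)
    (hp0c : Continuous p0) (hp1c : Continuous p1)
    (hP0 : ∀ x, P0 x = ∫ t in (0:ℝ)..x, p0 t)
    (hP1 : ∀ x, P1 x = ∫ t in (0:ℝ)..x, p1 t)
    (d0 d1 : ℝ → ℝ → ℝ) (gl0 gu0 gl1 gu1 : ℝ)
    (hglu0 : gl0 ≤ gu0) (hgu0 : gu0 ≤ 0)
    (hglu1 : gl1 ≤ gu1) (hgu1 : gu1 ≤ 0)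
    (hd0_smooth : ∀ x₂, ContDiffOn ℝ 1 (fun x₁ => d0 x₁ x₂) (Set.Icc 0 x₂))
    (hd1_smooth : ∀ x₂, ContDiffOn ℝ 1 (fun x₁ => d1 x₁ x₂) (Set.Icc 0 x₂))
    (hd0_grad : ∀ x₂ x₁, x₁ ∈ Set.Ioo 0 x₂ →
      deriv (fun x => d0 x x₂) x₁ ∈ Set.Icc gl0 gu0)
    (hd1_grad : ∀ x₂ x₁, x₁ ∈ Set.Ioo 0 x₂ →
      deriv (fun x => d1 x x₂) x₁ ∈ Set.Icc gl1 gu1)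
    (hd0_zero : ∀ x, d0 x x = 0) (hd1_zero : ∀ x, d1 x x = 0)
    (τ0 τ1 : ℝ) (hτ0 : 0 < τ0) (hτ1 : 0 < τ1)
    (G H E0 E1 : ℝ)
    (hG : G = (∫ x in (0:ℝ)..τ0, d0 x τ0 * p0 x) - (∫ x in (0:ℝ)..τ1, d1 x τ1 * p1 x))
    (hH : H = P1 τ1 - P0 τ0)
    (hE0 : E0 = ∫ x in (0:ℝ)..τ0, x * p0 x)
    (hE1 : E1 = ∫ x in (0:ℝ)..τ1, x * p1 x) :
    G ≤ gu1 * τ1 * H + (gu1 * τ1 - gl0 * τ0) * P0 τ0 - gu1 * E1 + gl0 * E0 ∧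
    G ≥ gl1 * τ1 * H + (gl1 * τ1 - gu0 * τ0) * P0 τ0 - gl1 * E1 + gu0 * E0 := by
  have b0 := int_bound (fun x => d0 x τ0) p0 hp0 hp0c gl0 gu0 τ0 hτ0
    (hd0_smooth τ0) (fun x hx => hd0_grad τ0 x hx) (hd0_zero τ0)
  have b1 := int_bound (fun x => d1 x τ1) p1 hp1 hp1c gl1 gu1 τ1 hτ1
    (hd1_smooth τ1) (fun x hx => hd1_grad τ1 x hx) (hd1_zero τ1)
  rw [← hE0, ← hP0 τ0] at b0
  rw [← hE1, ← hP1 τ1] at b1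
  constructor
  · have : G ≤ (gl0 * E0 - gl0 * τ0 * P0 τ0) - (gu1 * E1 - gu1 * τ1 * P1 τ1) := by
      rw [hG]; exact sub_le_sub b0.2 b1.1
    rw [hH] at *
    nlinarith [this]
  · have : (gu0 * E0 - gu0 * τ0 * P0 τ0) - (gl1 * E1 - gl1 * τ1 * P1 τ1) ≤ G := by
      rw [hG]; exact sub_le_sub b0.1 b1.2
    rw [hH] at *
    nlinarith [this]
end

section
/- (Quadratic cost social burden bound, Theorem A.1.) With linear classifier $f(x)=\mathbf{1}(u^\top x \geq v_z)$ for group $z$ and quadratic cost $c(x,x')=(x'-x)^\top B(x'-x)$ ($B$ symmetric positive definite), suppose $u^\top X$ is bounded below so that $M := \max_x(v_0 - u^\top x)$ is finite. Let $G$ be the social burden gap, $H = \Pr[u^\top X \geq v_0|Z=0]-\Pr[u^\top X \geq v_1|Z=1]$, $P_1 = \Pr[u^\top X < v_1|Z=1]$, and $E_0 = \mathbb{E}[u^\top X \cdot \mathbf{1}(u^\top X < v_0)|Z=0]$. Then $G \leq -\frac{2M}{u^\top B^{-1}u}(v_0 H - v_0 P_1 + E_0)$. -/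
open Matrix MeasureTheory

private lemma ptwise {M v w : ℝ} (h : v - w ≤ M) :
    (max (v - w) 0) ^ 2 ≤ 2 * M * max (v - w) 0 := by
  rcases le_or_gt (v - w) 0 with h0 | h0
  · simp [max_eq_right h0]
  · rw [max_eq_left h0.le]; nlinarith

/-- Theorem A.1: social burden gap bound for a linear classifier with
group-specific intercepts and quadratic (Mahalanobis-type) cost. -/
theorem stmt_13
    (n : ℕ) (B : Matrix (Fin n) (Fin n) ℝ) (hB : B.PosDef)
    (u : Fin n → ℝ) (hu : u ≠ 0) (v0 v1 : ℝ)
    (μ0 μ1 : Measure (Fin n → ℝ))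
    [IsProbabilityMeasure μ0] [IsProbabilityMeasure μ1]
    (hint0 : Integrable (fun x => u ⬝ᵥ x) μ0)
    (hint1 : Integrable (fun x => u ⬝ᵥ x) μ1)
    (M : ℝ)
    (hM0 : ∀ᵐ x ∂μ0, v0 - u ⬝ᵥ x ≤ M)
    (hM1 : ∀ᵐ x ∂μ1, v0 - u ⬝ᵥ x ≤ M)
    (G H P1 E0 : ℝ)
    (hG : G = (∫ x, (max (v0 - u ⬝ᵥ x) 0) ^ 2 / (u ⬝ᵥ (B⁻¹ *ᵥ u)) ∂μ0)
            - (∫ x, (max (v1 - u ⬝ᵥ x) 0) ^ 2 / (u ⬝ᵥ (B⁻¹ *ᵥ u)) ∂μ1))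
    (hH : H = (μ0 {x | v0 ≤ u ⬝ᵥ x}).toReal - (μ1 {x | v1 ≤ u ⬝ᵥ x}).toReal)
    (hP1 : P1 = (μ1 {x | u ⬝ᵥ x < v1}).toReal)
    (hE0 : E0 = ∫ x, (if u ⬝ᵥ x < v0 then u ⬝ᵥ x else 0) ∂μ0) :
    G ≤ -(2 * M / (u ⬝ᵥ (B⁻¹ *ᵥ u))) * (v0 * H - v0 * P1 + E0) := by
  have hc : 0 < u ⬝ᵥ (B⁻¹ *ᵥ u) := by simpa using hB.inv.dotProduct_mulVec_pos hu
  set c := u ⬝ᵥ (B⁻¹ *ᵥ u) with hcdef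
  -- measurability of w = u ⬝ᵥ x
  have hmw : Measurable fun x : Fin n → ℝ => u ⬝ᵥ x := by
    unfold dotProduct
    exact Finset.measurable_sum _ fun i _ => by fun_prop
  have hset0 : MeasurableSet {x : Fin n → ℝ | u ⬝ᵥ x < v0} :=
    measurableSet_lt hmw measurable_const
  have hset1 : MeasurableSet {x : Fin n → ℝ | u ⬝ᵥ x < v1} :=
    measurableSet_lt hmw measurable_const
  -- integrability pieces over μ0
  have int_ifw : Integrable (fun x => if u ⬝ᵥ x < v0 then u ⬝ᵥ x else 0) μ0 := by
    refine hint0.abs.mono' ((hmw.ite hset0 measurable_const).aestronglyMeasurable) ?_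
    filter_upwards with x
    split_ifs
    · exact (Real.norm_eq_abs _).le
    · simpa using abs_nonneg _
  have int_ifc : Integrable (fun x => if u ⬝ᵥ x < v0 then v0 else 0) μ0 := by
    refine ⟨(Measurable.ite hset0 measurable_const measurable_const).aestronglyMeasurable, ?_⟩
    apply HasFiniteIntegral.of_bounded (C := |v0|)
    filter_upwards with x
    split_ifs <;> simp [abs_nonneg]
  have hmaxeq : ∀ x : Fin n → ℝ, max (v0 - u ⬝ᵥ x) 0
      = (if u ⬝ᵥ x < v0 then v0 else 0) - (if u ⬝ᵥ x < v0 then u ⬝ᵥ x else 0) := by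
    intro x
    rcases lt_or_ge (u ⬝ᵥ x) v0 with h | h
    · simp [h, max_eq_left (by linarith : (0:ℝ) ≤ v0 - u ⬝ᵥ x)]
    · simp [not_lt.2 h, max_eq_right (by linarith : v0 - u ⬝ᵥ x ≤ 0)]
  have int_max : Integrable (fun x => max (v0 - u ⬝ᵥ x) 0) μ0 := by
    have := int_ifc.sub int_ifw
    refine this.congr ?_
    filter_upwards with x using (hmaxeq x).symm
  -- value of ∫ max
  have hI : ∫ x, max (v0 - u ⬝ᵥ x) 0 ∂μ0
      = v0 * (μ0 {x | u ⬝ᵥ x < v0}).toReal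
        - ∫ x, (if u ⬝ᵥ x < v0 then u ⬝ᵥ x else 0) ∂μ0 := by
    rw [integral_congr_ae (Filter.Eventually.of_forall hmaxeq), integral_sub int_ifc int_ifw]
    congr 1
    have : (fun x : Fin n → ℝ => if u ⬝ᵥ x < v0 then v0 else 0)
        = Set.indicator {x | u ⬝ᵥ x < v0} (fun _ => v0) := by
      ext x; simp [Set.indicator_apply]
    rw [this, integral_indicator_const _ hset0, smul_eq_mul, mul_comm]
    rfl
  set I : ℝ := ∫ x, max (v0 - u ⬝ᵥ x) 0 ∂μ0 with hIdef
  -- probabilities of complements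
  have hcompl : ∀ (μ : Measure (Fin n → ℝ)) [IsProbabilityMeasure μ] (v : ℝ),
      (μ {x | v ≤ u ⬝ᵥ x}).toReal = 1 - (μ {x | u ⬝ᵥ x < v}).toReal := by
    intro μ _ v
    have h1 : {x : Fin n → ℝ | v ≤ u ⬝ᵥ x} = {x | u ⬝ᵥ x < v}ᶜ := by
      ext x; simp [not_lt]
    rw [h1, prob_compl_eq_one_sub (measurableSet_lt hmw measurable_const),
      ENNReal.toReal_sub_of_le prob_le_one (by simp)]
    simp
  -- the RHS equals 2*M*I/c
  have hR : -(2 * M / c) * (v0 * H - v0 * P1 + E0) = 2 * M * I / c := by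
    rw [hH, hP1, hE0, hcompl μ0 v0, hcompl μ1 v1, hI]
    ring
  -- key inequality on μ0
  have key : ∫ x, (max (v0 - u ⬝ᵥ x) 0) ^ 2 ∂μ0 ≤ 2 * M * I := by
    have intφ : Integrable (fun x => (max (v0 - u ⬝ᵥ x) 0) ^ 2) μ0 := by
      refine ⟨(((measurable_const.sub hmw).max measurable_const).pow_const 2).aestronglyMeasurable,
        ?_⟩
      apply HasFiniteIntegral.of_bounded (C := (max M 0) ^ 2)
      filter_upwards [hM0] with x hx
      rw [Real.norm_eq_abs, abs_of_nonneg (by positivity)]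
      have h1 : max (v0 - u ⬝ᵥ x) 0 ≤ max M 0 := max_le_max hx le_rfl
      have h2 : (0:ℝ) ≤ max (v0 - u ⬝ᵥ x) 0 := le_max_right _ _
      nlinarith
    have hmono : ∫ x, (max (v0 - u ⬝ᵥ x) 0) ^ 2 ∂μ0
        ≤ ∫ x, 2 * M * max (v0 - u ⬝ᵥ x) 0 ∂μ0 := by
      refine integral_mono_ae intφ (int_max.const_mul (2 * M)) ?_
      filter_upwards [hM0] with x hx using ptwise hx
    rw [integral_const_mul] at hmono
    exact hmono
  -- G bounded
  have hG1 : (∫ x, (max (v1 - u ⬝ᵥ x) 0) ^ 2 / c ∂μ1) ≥ 0 :=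
    integral_nonneg fun x => div_nonneg (by positivity) hc.le
  have hG0 : (∫ x, (max (v0 - u ⬝ᵥ x) 0) ^ 2 / c ∂μ0) ≤ 2 * M * I / c := by
    rw [integral_div]
    gcongr
  rw [hG, hR]
  linarith
end

section
/- (Reduction of linear multi-dimensional problem to one dimension.) Let $f(x) = \mathbf{1}(u^\top x \geq v)$ and $c(x,x') = d^\top(x'-x)$ for $x' \geq x$, with $d > 0$ and $w^\star = \max_i u_i/d_i > 0$. Define $W = u^\top X$. Then the expected manipulation cost $\mathbb{E}[\min\{d^\top(x'-X) : x' \geq X, u^\top x' \geq v\} \cdot \mathbf{1}(u^\top X < v)]$ equals $\frac{1}{w^\star}\mathbb{E}[(v - W)\mathbf{1}(W < v)] = \frac{1}{w^\star}\big(v\Pr[W<v] - \mathbb{E}[W\mathbf{1}(W<v)]\big)$. -/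
open Matrix MeasureTheory

lemma sInf_cost (n : ℕ) (u d : Fin n → ℝ) (v : ℝ)
    (hd : ∀ i, 0 < d i)
    (wstar : ℝ) (hw : IsGreatest (Set.range fun i => u i / d i) wstar)
    (hwpos : 0 < wstar) (x : Fin n → ℝ) (hx : u ⬝ᵥ x < v) :
    sInf {c : ℝ | ∃ x' : Fin n → ℝ,
          (∀ i, x i ≤ x' i) ∧ v ≤ u ⬝ᵥ x' ∧ c = d ⬝ᵥ (x' - x)}
      = (v - u ⬝ᵥ x) / wstar := by
  obtain ⟨i0, hi0⟩ := hw.1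
  have hdi0 : 0 < d i0 := hd i0
  have hui0 : u i0 = wstar * d i0 := by field_simp at hi0; linarith [hi0]
  have hui0pos : 0 < u i0 := by rw [hui0]; positivity
  set t := v - u ⬝ᵥ x with ht
  have htpos : 0 < t := by simp [ht]; linarith
  have hmem : t / wstar ∈ {c : ℝ | ∃ x' : Fin n → ℝ,
          (∀ i, x i ≤ x' i) ∧ v ≤ u ⬝ᵥ x' ∧ c = d ⬝ᵥ (x' - x)} := by
    refine ⟨x + Pi.single i0 (t / u i0), ?_, ?_, ?_⟩
    · intro i
      rcases eq_or_ne i i0 with rfl | h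
      · simp [Pi.single_eq_same]; positivity
      · simp [Pi.single_eq_of_ne h]
    · have : u ⬝ᵥ (x + Pi.single i0 (t / u i0)) = u ⬝ᵥ x + u i0 * (t / u i0) := by
        rw [dotProduct_add, dotProduct_single]
      rw [this, mul_div_cancel₀ _ (ne_of_gt hui0pos)]
      simp [ht]
    · have : (x + Pi.single i0 (t / u i0)) - x = Pi.single i0 (t / u i0) := by abel
      rw [this, dotProduct_single, hui0]
      field_simp
  have hlb : ∀ c ∈ {c : ℝ | ∃ x' : Fin n → ℝ,
          (∀ i, x i ≤ x' i) ∧ v ≤ u ⬝ᵥ x' ∧ c = d ⬝ᵥ (x' - x)}, t / wstar ≤ c := by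
    rintro c ⟨x', hge, hv, rfl⟩
    have key : u ⬝ᵥ (x' - x) ≤ wstar * (d ⬝ᵥ (x' - x)) := by
      rw [dotProduct, dotProduct, Finset.mul_sum]
      apply Finset.sum_le_sum
      intro i _
      have h1 : u i ≤ wstar * d i := by
        have := hw.2 ⟨i, rfl⟩
        rw [div_le_iff₀ (hd i)] at this
        exact this
      have h2 : 0 ≤ x' i - x i := by linarith [hge i]
      calc u i * (x' - x) i = u i * (x' i - x i) := rfl
        _ ≤ wstar * d i * (x' i - x i) := by nlinarith
        _ = wstar * (d i * (x' - x) i) := by simp [Pi.sub_apply]; ring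
    have ht' : t ≤ u ⬝ᵥ (x' - x) := by
      rw [dotProduct_sub]; simp [ht]; linarith
    rw [div_le_iff₀ hwpos]
    nlinarith
  exact le_antisymm (csInf_le ⟨t/wstar, hlb⟩ hmem) (le_csInf ⟨_, hmem⟩ hlb)

/-- Reduction of the linear multi-dimensional strategic problem to one dimension:
the expected manipulation cost equals
`(1/w⋆)·E[(v - W)·1(W < v)] = (1/w⋆)(v·Pr[W < v] - E[W·1(W < v)])` for `W = uᵀX`. -/
theorem stmt_16
    (n : ℕ) (u d : Fin n → ℝ) (v : ℝ)
    (hd : ∀ i, 0 < d i) (hu : ∃ i, 0 < u i)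
    (wstar : ℝ) (hw : IsGreatest (Set.range fun i => u i / d i) wstar)
    (hwpos : 0 < wstar)
    (μ : Measure (Fin n → ℝ)) [IsProbabilityMeasure μ]
    (hint : Integrable (fun x => u ⬝ᵥ x) μ) :
    (∫ x, (if u ⬝ᵥ x < v then
        sInf {c : ℝ | ∃ x' : Fin n → ℝ,
          (∀ i, x i ≤ x' i) ∧ v ≤ u ⬝ᵥ x' ∧ c = d ⬝ᵥ (x' - x)}
      else 0) ∂μ)
      = (1 / wstar) * ∫ x, (if u ⬝ᵥ x < v then v - u ⬝ᵥ x else 0) ∂μ ∧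
    (1 / wstar) * (∫ x, (if u ⬝ᵥ x < v then v - u ⬝ᵥ x else 0) ∂μ)
      = (1 / wstar) * (v * (μ {x | u ⬝ᵥ x < v}).toReal
          - ∫ x, (if u ⬝ᵥ x < v then u ⬝ᵥ x else 0) ∂μ) := by
  have hmeas : Measurable fun x : Fin n → ℝ => u ⬝ᵥ x := by
    simp only [dotProduct]
    exact Finset.measurable_sum _ (fun i _ => (measurable_pi_apply i).const_mul _)
  have hs : MeasurableSet {x : Fin n → ℝ | u ⬝ᵥ x < v} :=
    measurableSet_lt hmeas measurable_const
  constructor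
  · rw [← integral_const_mul]
    apply integral_congr_ae
    filter_upwards with x
    by_cases h : u ⬝ᵥ x < v
    · simp only [h, if_true]
      rw [sInf_cost n u d v hd wstar hw hwpos x h]
      field_simp
    · simp [h]
  · congr 1
    have e1 : (fun x : Fin n → ℝ => if u ⬝ᵥ x < v then v - u ⬝ᵥ x else 0)
        = fun x => (if u ⬝ᵥ x < v then v else 0) - (if u ⬝ᵥ x < v then u ⬝ᵥ x else 0) := by
      funext x; by_cases h : u ⬝ᵥ x < v <;> simp [h]
    have i1 : Integrable (fun x : Fin n → ℝ => if u ⬝ᵥ x < v then v else 0) μ := by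
      have := (integrable_const (μ := μ) v).indicator hs
      exact this.congr (Filter.Eventually.of_forall fun x => by simp [Set.indicator_apply])
    have i2 : Integrable (fun x : Fin n → ℝ => if u ⬝ᵥ x < v then u ⬝ᵥ x else 0) μ := by
      have := hint.indicator hs
      exact this.congr (Filter.Eventually.of_forall fun x => by simp [Set.indicator_apply])
    rw [e1, integral_sub i1 i2]
    congr 1
    have : (fun x : Fin n → ℝ => if u ⬝ᵥ x < v then v else 0)
        = Set.indicator {x | u ⬝ᵥ x < v} (fun _ => v) := by
      funext x; simp [Set.indicator_apply]
    rw [this, integral_indicator_const _ hs]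
    simp [mul_comm]
    exact Or.inl rfl
end
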